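/- Let G be a graph of order n and let k be an integer with 3 ≤ k ≤ n − 1. If the vertex connectivity κ(G) ≥ k, then τ_k(G) ≥ 1, i.e., for every k-subset S of V(G) there exists a pedant S-Steiner tree in G. -/

import Mathlib

open SimpleGraph Finset

variable {V : Type*}

/-- A pedant `S`-Steiner tree in `G`: a subtree of `G` containing `S` in which
every vertex of `S` has degree one. -/
def IsPedantTree [Fintype V] (G : SimpleGraph V) (S : Finset V) (T : G.Subgraph) : Prop :=
  T.coe.IsTree ∧ (↑S : Set V) ⊆ T.verts ∧ ∀ v ∈ S, (T.neighborSet v).ncard = 1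

/-- Two pedant `S`-Steiner trees are internally disjoint if they are edge-disjoint and
their vertex sets intersect exactly in `S`. -/
def InternallyDisjoint [Fintype V] (G : SimpleGraph V) (S : Finset V)
    (T T' : G.Subgraph) : Prop :=
  T.edgeSet ∩ T'.edgeSet = ∅ ∧ T.verts ∩ T'.verts = (↑S : Set V)

/-- The local pedant-tree connectivity `τ_G(S)`: the maximum number of pairwise
internally disjoint pedant `S`-Steiner trees in `G`. -/
noncomputable def localPedantConn [Fintype V] (G : SimpleGraph V) (S : Finset V) : ℕ :=
  sSup {m | ∃ 𝒯 : Finset G.Subgraph, 𝒯.card = m ∧ (∀ T ∈ 𝒯, IsPedantTree G S T) ∧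
    ∀ T ∈ 𝒯, ∀ T' ∈ 𝒯, T ≠ T' → InternallyDisjoint G S T T'}

/-- The pedant tree-connectivity `τ_k(G) = min {τ_G(S) : |S| = k}`. -/
noncomputable def pedantConn [Fintype V] (G : SimpleGraph V) (k : ℕ) : ℕ :=
  sInf {m | ∃ S : Finset V, S.card = k ∧ localPedantConn G S = m}

/-- The vertex connectivity of `G`: the least size of a vertex set whose removal leaves a
graph which is not preconnected, or leaves at most one vertex. -/
noncomputable def vConn [Fintype V] (G : SimpleGraph V) : ℕ :=
  sInf {m | ∃ U : Finset V, U.card = m ∧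
    (¬ (G.induce ((↑U : Set V)ᶜ)).Preconnected ∨ Fintype.card V ≤ m + 1)}



private lemma reachable_delete_of_adj {W : Type*} {H : SimpleGraph W} {e : Sym2 W}
    (hr : ∀ x y : W, s(x, y) = e → (H \ fromEdgeSet {e}).Reachable x y)
    {a b : W} (hab : H.Adj a b) : (H \ fromEdgeSet {e}).Reachable a b := by
  by_cases he : s(a, b) = e
  · exact hr a b he
  · exact Adj.reachable (by simp [fromEdgeSet_adj, hab, he, hab.ne])

private lemma preconnected_delete {W : Type*} {H : SimpleGraph W} {e : Sym2 W}
    (hc : H.Preconnected)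
    (hr : ∀ x y : W, s(x, y) = e → (H \ fromEdgeSet {e}).Reachable x y) :
    (H \ fromEdgeSet {e}).Preconnected := by
  intro a b
  obtain ⟨p⟩ := hc a b
  induction p with
  | nil => exact Reachable.refl _
  | cons h q ih => exact (reachable_delete_of_adj hr h).trans ih

private lemma exists_connected_delete {W : Type*} [Fintype W] {H : SimpleGraph W}
    (hc : H.Connected) (hac : ¬ H.IsAcyclic) :
    ∃ H' : SimpleGraph W, H'.Connected ∧ H'.edgeSet.ncard + 1 = H.edgeSet.ncard := by
  classical
  rw [IsAcyclic] at hac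
  push_neg at hac
  obtain ⟨v, c, hcyc⟩ := hac
  have hlen : c.edges ≠ [] := by
    have h3 := hcyc.three_le_length
    intro h
    have : c.edges.length = c.length := c.length_edges
    rw [h] at this
    simp at this
    omega
  obtain ⟨e, he⟩ := List.exists_mem_of_ne_nil _ hlen
  induction e using Sym2.ind with
  | _ x y =>
    have hadj : H.Adj x y := c.edges_subset_edgeSet he
    have hbr : ¬ H.IsBridge s(x, y) := fun hb =>
      (isBridge_iff_forall_cycle_notMem hadj).mp hb c hcyc he
    rw [isBridge_iff] at hbr
    push_neg at hbr
    have hreach := hbr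
    have hr : ∀ a b : W, s(a, b) = s(x, y) →
        (H \ fromEdgeSet {s(x, y)}).Reachable a b := by
      intro a b hab
      rw [Sym2.eq_iff] at hab
      rcases hab with ⟨rfl, rfl⟩ | ⟨rfl, rfl⟩
      · exact hreach
      · exact hreach.symm
    haveI : Nonempty W := hc.nonempty
    refine ⟨H \ fromEdgeSet {s(x, y)}, ⟨preconnected_delete hc.preconnected hr⟩, ?_⟩
    have hE : (H \ fromEdgeSet {s(x, y)}).edgeSet = H.edgeSet \ {s(x, y)} := by
      rw [edgeSet_sdiff, edgeSet_fromEdgeSet, edgeSet_sdiff_sdiff_isDiag]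
    rw [hE]
    have hmem : s(x, y) ∈ H.edgeSet := hadj
    have hfin : H.edgeSet.Finite := Set.toFinite _
    rw [Set.ncard_diff_singleton_of_mem hmem]
    have : 1 ≤ H.edgeSet.ncard := by
      rw [Nat.one_le_iff_ne_zero]
      intro h0
      rw [Set.ncard_eq_zero hfin] at h0
      simp [h0] at hmem
    omega

private lemma card_le_ncard_edgeSet_add_one {W : Type*} [Fintype W] :
    ∀ (n : ℕ) (H : SimpleGraph W), H.edgeSet.ncard = n → H.Connected →
      Fintype.card W ≤ n + 1 := by
  intro n
  induction n using Nat.strong_induction_on with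
  | _ n ih =>
    intro H hn hc
    classical
    by_cases hac : H.IsAcyclic
    · have ht : H.IsTree := ⟨hc, hac⟩
      have hcard := ht.card_edgeFinset
      have : H.edgeSet.ncard = H.edgeFinset.card := by
        exact (Set.ncard_eq_toFinset_card' _).trans (congrArg Finset.card (by ext; simp))
      omega
    · obtain ⟨H', hc', hcard'⟩ := exists_connected_delete hc hac
      have hlt : H'.edgeSet.ncard < n := by omega
      have := ih _ hlt H' rfl hc'
      omega

private lemma isTree_of_connected_of_card {W : Type*} [Fintype W] {H : SimpleGraph W}
    (hc : H.Connected) (hcard : H.edgeSet.ncard + 1 = Fintype.card W) : H.IsTree := by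
  refine ⟨hc, ?_⟩
  by_contra hac
  obtain ⟨H', hc', hcard'⟩ := exists_connected_delete hc hac
  have := card_le_ncard_edgeSet_add_one H'.edgeSet.ncard H' rfl hc'
  omega

private lemma subgraph_isTree [Fintype V] {G : SimpleGraph V} {T : G.Subgraph}
    (hc : T.Connected) (hcard : T.edgeSet.ncard + 1 = T.verts.ncard) : T.coe.IsTree := by
  classical
  apply isTree_of_connected_of_card hc.coe
  have h1 : Fintype.card T.verts = T.verts.ncard := by
    rw [← Nat.card_coe_set_eq, Nat.card_eq_fintype_card]
  have h2 : T.coe.edgeSet.ncard = T.edgeSet.ncard := by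
    rw [← T.image_coe_edgeSet_coe,
      Set.ncard_image_of_injective _ (Sym2.map.injective Subtype.val_injective)]
  rw [h1, h2]
  exact hcard

private lemma exists_prefix_to_set {G : SimpleGraph V} (A : Set V) :
    ∀ {a b : V} (p : G.Walk a b), p.IsPath → a ∉ A → b ∈ A →
      ∃ (c : V) (q : G.Walk a c), q.IsPath ∧ c ∈ A ∧
        (∀ x ∈ q.support, x ∈ p.support) ∧ (∀ x ∈ q.support, x ∈ A → x = c) := by
  intro a b p
  induction p with
  | nil => intro _ ha hb; exact absurd hb ha
  | @cons u x w h q ih =>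
    intro hp ha hb
    by_cases hx : x ∈ A
    · refine ⟨x, Walk.cons h Walk.nil, ?_, hx, ?_, ?_⟩
      · rw [Walk.cons_isPath_iff]
        simp [h.ne]
      · intro y hy
        simp only [Walk.support_cons, Walk.support_nil, List.mem_cons] at hy ⊢
        rcases hy with rfl | rfl | hy
        · left; rfl
        · right; exact q.start_mem_support
        · simp at hy
      · intro y hy hyA
        simp only [Walk.support_cons, Walk.support_nil, List.mem_cons] at hy
        rcases hy with rfl | rfl | hy
        · exact absurd hyA ha
        · rfl
        · simp at hy
    · obtain ⟨c, q', hq', hc, hsub, honly⟩ :=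
        ih ((Walk.cons_isPath_iff h q).mp hp).1 hx hb
      have hu : u ∉ q'.support := fun huq =>
        ((Walk.cons_isPath_iff h q).mp hp).2 (hsub u huq)
      refine ⟨c, Walk.cons h q', (Walk.cons_isPath_iff h q').mpr ⟨hq', hu⟩, hc, ?_, ?_⟩
      · intro y hy
        simp only [Walk.support_cons, List.mem_cons] at hy ⊢
        rcases hy with rfl | hy
        · left; rfl
        · right; exact hsub y hy
      · intro y hy hyA
        simp only [Walk.support_cons, List.mem_cons] at hy
        rcases hy with rfl | hy
        · exact absurd hyA ha
        · exact honly y hy hyA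

private lemma ncard_neighborSet_start {G : SimpleGraph V} {a c : V}
    (q : G.Walk a c) (hq : q.IsPath) (hac : a ≠ c) :
    (q.toSubgraph.neighborSet a).ncard = 1 := by
  classical
  cases q with
  | nil => exact absurd rfl hac
  | @cons _ x _ h r =>
    have hr : a ∉ r.support := ((Walk.cons_isPath_iff h r).mp hq).2
    have h1 : r.toSubgraph.neighborSet a = ∅ := by
      ext y
      simp only [Subgraph.mem_neighborSet, Set.mem_empty_iff_false, iff_false]
      intro hy
      exact hr ((Walk.mem_verts_toSubgraph r).mp hy.fst_mem)
    have h2 : (G.subgraphOfAdj h).neighborSet a = {x} := by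
      rw [neighborSet_subgraphOfAdj]
      simp [h.ne]
    show ((G.subgraphOfAdj h ⊔ r.toSubgraph).neighborSet a).ncard = 1
    rw [Subgraph.neighborSet_sup, h1, h2, Set.union_empty, Set.ncard_singleton]

private lemma exists_path_avoiding [Fintype V] {G : SimpleGraph V} {k : ℕ}
    (hκ : k ≤ vConn G) (U : Finset V) (hU : U.card < k) {a b : V}
    (ha : a ∉ U) (hb : b ∉ U) :
    ∃ p : G.Walk a b, p.IsPath ∧ ∀ x ∈ p.support, x ∉ U := by
  classical
  have hpre : (G.induce ((↑U : Set V)ᶜ)).Preconnected := by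
    by_contra hnot
    have hmem : U.card ∈ {m | ∃ U' : Finset V, U'.card = m ∧
        (¬ (G.induce ((↑U' : Set V)ᶜ)).Preconnected ∨ Fintype.card V ≤ m + 1)} :=
      ⟨U, rfl, Or.inl hnot⟩
    have := Nat.sInf_le hmem
    rw [vConn] at hκ
    omega
  have ha' : a ∈ ((↑U : Set V)ᶜ) := by simpa using ha
  have hb' : b ∈ ((↑U : Set V)ᶜ) := by simpa using hb
  obtain ⟨w⟩ := hpre ⟨a, ha'⟩ ⟨b, hb'⟩
  have hw : w.bypass.IsPath := Walk.bypass_isPath w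
  let f := SimpleGraph.Embedding.induce (G := G) ((↑U : Set V)ᶜ)
  refine ⟨(w.bypass.map f.toHom), Walk.map_isPath_of_injective (show Function.Injective ⇑f.toHom from f.injective) hw, ?_⟩
  intro x hx
  replace hx : x ∈ (w.bypass.map f.toHom).support := hx
  rw [Walk.support_map, List.mem_map] at hx
  obtain ⟨⟨y, hy⟩, _, rfl⟩ := hx
  exact (by simpa using hy : y ∉ U)

private lemma subgraph_fintype_aux [Fintype V] (G : SimpleGraph V) :
    ∃ N : ℕ, ∀ 𝒯 : Finset G.Subgraph, 𝒯.card ≤ N := by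
  classical
  have hinj : Function.Injective (fun T : G.Subgraph => (T.verts, T.Adj)) := by
    intro T1 T2 h
    simp only [Prod.mk.injEq] at h
    exact SimpleGraph.Subgraph.ext h.1 h.2
  haveI : Fintype G.Subgraph := Fintype.ofInjective _ hinj
  exact ⟨Fintype.card G.Subgraph, fun 𝒯 => Finset.card_le_univ 𝒯⟩

private lemma exists_pedant [Fintype V] (G : SimpleGraph V) (k : ℕ)
    (h3 : 3 ≤ k) (hkn : k ≤ Fintype.card V - 1) (hκ : k ≤ vConn G)
    (S : Finset V) (hS : S.card = k) : ∃ T : G.Subgraph, IsPedantTree G S T := by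
  classical
  have hcardV : k + 1 ≤ Fintype.card V := by omega
  obtain ⟨v, hv⟩ : ∃ v, v ∉ S := by
    by_contra hcon
    push_neg at hcon
    have hsub : (Finset.univ : Finset V) ⊆ S := fun x _ => hcon x
    have := Finset.card_le_card hsub
    rw [Finset.card_univ, hS] at this
    omega
  have main : ∀ S' : Finset V, S' ⊆ S → ∃ T : G.Subgraph,
      T.Connected ∧ T.edgeSet.ncard + 1 = T.verts.ncard ∧ v ∈ T.verts ∧
      (↑S' : Set V) ⊆ T.verts ∧ (T.verts ∩ ↑S ⊆ ↑S') ∧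
      ∀ s ∈ S', (T.neighborSet s).ncard = 1 := by
    intro S'
    induction S' using Finset.induction_on with
    | empty =>
      intro _
      refine ⟨G.singletonSubgraph v, SimpleGraph.Subgraph.singletonSubgraph_connected, ?_, ?_, ?_, ?_, ?_⟩
      · simp [SimpleGraph.edgeSet_singletonSubgraph, SimpleGraph.singletonSubgraph_verts]
      · simp [SimpleGraph.singletonSubgraph_verts]
      · simp
      · rintro x ⟨hx1, hx2⟩
        rw [SimpleGraph.singletonSubgraph_verts, Set.mem_singleton_iff] at hx1
        subst hx1
        exact absurd (by exact_mod_cast hx2) hv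
      · simp
    | @insert s S' hs ih =>
      intro hsub
      obtain ⟨T, hTc, hTcard, hvT, hS'T, hTS, hdeg⟩ :=
        ih (Finset.Subset.trans (Finset.subset_insert s S') hsub)
      have hsS : s ∈ S := hsub (Finset.mem_insert_self s S')
      have hsT : s ∉ T.verts := by
        intro h
        exact hs (by exact_mod_cast hTS ⟨h, by exact_mod_cast hsS⟩)
      set U : Finset V := S.erase s with hU
      have hUcard : U.card < k := by
        rw [hU, Finset.card_erase_of_mem hsS, hS]
        omega
      have hsU : s ∉ U := Finset.notMem_erase s S
      have hvU : v ∉ U := fun h => hv (Finset.mem_of_mem_erase h)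
      obtain ⟨p, hp, hpU⟩ := exists_path_avoiding hκ U hUcard hsU hvU
      obtain ⟨c, q, hq, hcT, hqsub, honly⟩ := exists_prefix_to_set T.verts p hp hsT hvT
      have hqU : ∀ x ∈ q.support, x ∉ U := fun x hx => hpU x (hqsub x hx)
      have hsc : s ≠ c := fun h => hsT (h ▸ hcT)
      have hcS : c ∉ U := hqU c q.end_mem_support
      -- vertex sets
      have hverts : q.toSubgraph.verts = {x | x ∈ q.support} := q.verts_toSubgraph
      have hqvT : q.toSubgraph.verts ∩ T.verts = {c} := by
        rw [hverts]
        ext x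
        constructor
        · rintro ⟨hx1, hx2⟩
          exact honly x hx1 hx2
        · rintro rfl
          exact ⟨q.end_mem_support, hcT⟩
      have hqvcard : q.toSubgraph.verts.ncard = q.length + 1 := by
        rw [hverts, ← List.coe_toFinset, Set.ncard_coe_finset,
          List.toFinset_card_of_nodup hq.support_nodup, Walk.length_support]
      have hqecard : q.toSubgraph.edgeSet.ncard = q.length := by
        rw [q.edgeSet_toSubgraph, Walk.edgeSet, ← List.coe_toFinset, Set.ncard_coe_finset,
          List.toFinset_card_of_nodup hq.edges_nodup, Walk.length_edges]
      have hdisj : Disjoint q.toSubgraph.edgeSet T.edgeSet := by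
        rw [Set.disjoint_left]
        intro e he1 he2
        rw [q.edgeSet_toSubgraph, Walk.mem_edgeSet] at he1
        induction e using Sym2.ind with
        | _ x y =>
          rw [SimpleGraph.Subgraph.mem_edgeSet] at he2
          have hx : x ∈ T.verts := he2.fst_mem
          have hy : y ∈ T.verts := he2.symm.fst_mem
          have hxs : x ∈ q.support := q.fst_mem_support_of_mem_edges he1
          have hys : y ∈ q.support := q.snd_mem_support_of_mem_edges he1
          have hxc : x = c := honly x hxs hx
          have hyc : y = c := honly y hys hy
          exact (T.adj_sub he2).ne (hxc.trans hyc.symm)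
      have hvertsfin : q.toSubgraph.verts.Finite := Set.toFinite _
      have hTvfin : T.verts.Finite := Set.toFinite _
      refine ⟨q.toSubgraph ⊔ T, ?_, ?_, Or.inr hvT, ?_, ?_, ?_⟩
      · refine SimpleGraph.Subgraph.connected_sup q.toSubgraph_connected.preconnected hTc.preconnected ?_
        exact ⟨c, (by rw [hverts]; exact q.end_mem_support : c ∈ q.toSubgraph.verts), hcT⟩
      · rw [SimpleGraph.Subgraph.verts_sup, SimpleGraph.Subgraph.edgeSet_sup]
        have h1 := Set.ncard_union_add_ncard_inter q.toSubgraph.verts T.verts hvertsfin hTvfin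
        rw [hqvT, Set.ncard_singleton] at h1
        have h2 : (q.toSubgraph.edgeSet ∪ T.edgeSet).ncard
            = q.toSubgraph.edgeSet.ncard + T.edgeSet.ncard :=
          Set.ncard_union_eq hdisj (Set.toFinite _) (Set.toFinite _)
        rw [h2, hqecard]
        omega
      · rw [SimpleGraph.Subgraph.verts_sup]
        intro x hx
        rw [Finset.coe_insert, Set.mem_insert_iff] at hx
        rcases hx with rfl | hx
        · exact Or.inl (by rw [hverts]; exact q.start_mem_support)
        · exact Or.inr (hS'T hx)
      · rw [SimpleGraph.Subgraph.verts_sup]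
        rintro x ⟨hx1 | hx1, hx2⟩
        · rw [Finset.coe_insert, Set.mem_insert_iff]
          by_cases hxs : x = s
          · exact Or.inl hxs
          · exfalso
            have : x ∈ U := by
              rw [hU]
              exact Finset.mem_erase.mpr ⟨hxs, by exact_mod_cast hx2⟩
            exact hqU x (by rw [hverts] at hx1; exact hx1) this
        · rw [Finset.coe_insert, Set.mem_insert_iff]
          exact Or.inr (hTS ⟨hx1, hx2⟩)
      · intro t ht
        rw [Finset.mem_insert] at ht
        rw [SimpleGraph.Subgraph.neighborSet_sup]
        rcases ht with rfl | ht
        · have hTn : T.neighborSet t = ∅ := by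
            ext y
            simp only [SimpleGraph.Subgraph.mem_neighborSet, Set.mem_empty_iff_false, iff_false]
            intro hy
            exact hsT hy.fst_mem
          rw [hTn, Set.union_empty]
          exact ncard_neighborSet_start q hq hsc
        · have htT : t ∈ U := by
            rw [hU]
            refine Finset.mem_erase.mpr ⟨?_, hsub (Finset.mem_insert_of_mem ht)⟩
            intro hts
            exact hs (hts ▸ ht)
          have hqn : q.toSubgraph.neighborSet t = ∅ := by
            ext y
            simp only [SimpleGraph.Subgraph.mem_neighborSet, Set.mem_empty_iff_false, iff_false]
            intro hy
            have : t ∈ q.support := (q.mem_verts_toSubgraph).mp hy.fst_mem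
            exact hqU t this htT
          rw [hqn, Set.empty_union]
          exact hdeg t ht
  obtain ⟨T, hTc, hTcard, _, hST, _, hdegS⟩ := main S (Finset.Subset.refl S)
  exact ⟨T, subgraph_isTree hTc hTcard, hST, hdegS⟩

theorem pedantConn_pos_of_vConn [Fintype V] (G : SimpleGraph V) (k : ℕ)
    (h3 : 3 ≤ k) (hkn : k ≤ Fintype.card V - 1) (hκ : k ≤ vConn G) :
    1 ≤ pedantConn G k ∧
      ∀ S : Finset V, S.card = k → ∃ T : G.Subgraph, IsPedantTree G S T := by
  classical
  have hped : ∀ S : Finset V, S.card = k → ∃ T : G.Subgraph, IsPedantTree G S T :=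
    fun S hS => exists_pedant G k h3 hkn hκ S hS
  refine ⟨?_, hped⟩
  have hone : ∀ S : Finset V, S.card = k → 1 ≤ localPedantConn G S := by
    intro S hS
    obtain ⟨T, hT⟩ := hped S hS
    have hmem : 1 ∈ {m | ∃ 𝒯 : Finset G.Subgraph, 𝒯.card = m ∧
        (∀ T' ∈ 𝒯, IsPedantTree G S T') ∧
        ∀ T₁ ∈ 𝒯, ∀ T₂ ∈ 𝒯, T₁ ≠ T₂ → InternallyDisjoint G S T₁ T₂} := by
      refine ⟨{T}, Finset.card_singleton T, ?_, ?_⟩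
      · intro T' hT'
        rw [Finset.mem_singleton] at hT'
        subst hT'
        exact hT
      · intro T₁ h1 T₂ h2 hne
        rw [Finset.mem_singleton] at h1 h2
        exact absurd (h1.trans h2.symm) hne
    obtain ⟨N, hN⟩ := subgraph_fintype_aux G
    have hbdd : BddAbove {m | ∃ 𝒯 : Finset G.Subgraph, 𝒯.card = m ∧
        (∀ T' ∈ 𝒯, IsPedantTree G S T') ∧
        ∀ T₁ ∈ 𝒯, ∀ T₂ ∈ 𝒯, T₁ ≠ T₂ → InternallyDisjoint G S T₁ T₂} := by
      refine ⟨N, ?_⟩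
      rintro m ⟨𝒯, h𝒯, -, -⟩
      exact h𝒯 ▸ hN 𝒯
    exact le_csSup hbdd hmem
  have hkcard : k ≤ (Finset.univ : Finset V).card := by
    rw [Finset.card_univ]
    omega
  obtain ⟨S₀, -, hS₀⟩ := Finset.exists_subset_card_eq hkcard
  refine le_csInf ⟨localPedantConn G S₀, S₀, hS₀, rfl⟩ ?_
  rintro m ⟨S, hSk, rfl⟩
  exact hone S hSk
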